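/- Let t > 0. There exists δ > 0 such that for every complex z with |z| < δ, both series below converge and Σ_{n≥1} (1/(n·4^n)) b_n(0,t) · (4z/(1+z)²)^n = 2 Σ_{n≥1} (1/n) e^{−nt} L_{n−1}^{(1)}(2nt) z^n, where b_n(0,t) := 2 Σ_{k=1}^{n} binom(2n, n−k) e^{−kt} L_{k−1}^{(1)}(2kt). -/

import Mathlib

open scoped BigOperators

/-- Pochhammer symbol `(a)_k = a(a+1)⋯(a+k-1)` over ℝ. -/
noncomputable def pochR (a : ℝ) (k : ℕ) : ℝ := ∏ i ∈ Finset.range k, (a + i)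

/-- Generalized Laguerre polynomial `L_n^{(α)}(x)`. -/
noncomputable def Lag (n : ℕ) (α : ℝ) (x : ℝ) : ℝ :=
  (1 / (n.factorial : ℝ)) * ∑ j ∈ Finset.range (n + 1),
    (pochR (-(n : ℝ)) j / (j.factorial : ℝ)) * pochR (α + j + 1) (n - j) * x ^ j

/-- `b_n(0,t) = 2 Σ_{k=1}^n C(2n, n-k) e^{-kt} L_{k-1}^{(1)}(2kt)`. -/
noncomputable def b0coef (t : ℝ) (n : ℕ) : ℝ :=
  2 * ∑ k ∈ Finset.Icc 1 n,
    ((2 * n).choose (n - k) : ℝ) * Real.exp (-(k : ℝ) * t) * Lag (k - 1) 1 (2 * k * t)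

open Finset
set_option maxHeartbeats 1000000


/-- coefficient `a_{k,m} = C(2m-1, m-k)` for `1 ≤ k ≤ m`, else 0. -/
def aC (k m : ℕ) : ℕ := if 1 ≤ k ∧ k ≤ m then (2*m - 1).choose (m - k) else 0

lemma aC_of_le {k m : ℕ} (h1 : 1 ≤ k) (h2 : k ≤ m) : aC k m = (2*m - 1).choose (m - k) :=
  if_pos ⟨h1, h2⟩

lemma aC_eq_zero {k m : ℕ} (h : ¬ (1 ≤ k ∧ k ≤ m)) : aC k m = 0 := if_neg h

lemma aC_zero (k : ℕ) : aC k 0 = 0 := by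
  rcases Nat.eq_zero_or_pos k with rfl | h
  · exact aC_eq_zero (by omega)
  · exact aC_eq_zero (by omega)

lemma choose_le_two_pow' (n j : ℕ) (h : j ≤ n) : n.choose j ≤ 2 ^ n := by
  calc n.choose j ≤ ∑ i ∈ Finset.range (n+1), n.choose i :=
        Finset.single_le_sum (fun i _ => Nat.zero_le _) (Finset.mem_range.2 (by omega))
    _ = 2 ^ n := Nat.sum_range_choose n

lemma aC_le (k m : ℕ) : aC k m ≤ 4 ^ m := by
  unfold aC
  split
  · rename_i h
    calc (2*m - 1).choose (m - k) ≤ 2 ^ (2*m - 1) :=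
          choose_le_two_pow' _ _ (by omega)
      _ ≤ 2 ^ (2*m) := Nat.pow_le_pow_right (by omega) (by omega)
      _ = 4 ^ m := by rw [pow_mul]; norm_num
  · positivity

lemma pascal2 (N r : ℕ) : (N+2).choose (r+2) = N.choose r + 2 * N.choose (r+1) + N.choose (r+2) := by
  rw [show N+2 = (N+1)+1 from rfl, Nat.choose_succ_succ' (N+1) (r+1),
    Nat.choose_succ_succ' N r, Nat.choose_succ_succ' N (r+1)]
  ring

lemma rec2 (k m : ℕ) : aC (k+2) (m+1) = aC (k+1) m + 2 * aC (k+2) m + aC (k+3) m := by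
  rcases lt_or_ge m (k+1) with h | h
  · rw [aC_eq_zero (k := k+2) (by omega), aC_eq_zero (by omega), aC_eq_zero (by omega),
      aC_eq_zero (by omega)]
  rcases eq_or_lt_of_le h with rfl | h2
  · -- m = k+1
    rw [aC_of_le (by omega) (by omega), aC_of_le (by omega) (by omega),
      aC_eq_zero (by omega), aC_eq_zero (by omega)]
    have e1 : (k+1+1) - (k+2) = 0 := by omega
    have e2 : (k+1) - (k+1) = 0 := by omega
    rw [e1, e2, Nat.choose_zero_right, Nat.choose_zero_right]
  rcases eq_or_lt_of_le (Nat.succ_le_of_lt h2) with h3 | h3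
  · -- m = k+2
    have hm : m = k+2 := by omega
    subst hm
    rw [aC_of_le (by omega) (by omega), aC_of_le (by omega) (by omega),
      aC_of_le (by omega) (by omega), aC_eq_zero (by omega)]
    have e1 : (k+2+1) - (k+2) = 1 := by omega
    have e2 : (k+2) - (k+1) = 1 := by omega
    have e3 : (k+2) - (k+2) = 0 := by omega
    have e4 : 2*(k+2+1) - 1 = 2*k+5 := by omega
    have e5 : 2*(k+2) - 1 = 2*k+3 := by omega
    rw [e1, e2, e3, e4, e5, Nat.choose_one_right, Nat.choose_one_right, Nat.choose_zero_right]
  · -- m ≥ k+3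
    obtain ⟨e, rfl⟩ : ∃ e, m = k+3+e := ⟨m - (k+3), by omega⟩
    rw [aC_of_le (by omega) (by omega), aC_of_le (by omega) (by omega),
      aC_of_le (by omega) (by omega), aC_of_le (by omega) (by omega)]
    have e1 : (k+3+e+1) - (k+2) = e+2 := by omega
    have e2 : 2*(k+3+e+1) - 1 = (2*k+2*e+5)+2 := by omega
    have e3 : (k+3+e) - (k+1) = e+2 := by omega
    have e4 : (k+3+e) - (k+2) = e+1 := by omega
    have e5 : (k+3+e) - (k+3) = e := by omega
    have e6 : 2*(k+3+e) - 1 = 2*k+2*e+5 := by omega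
    rw [e1, e2, e3, e4, e5, e6, pascal2]
    ring

lemma rec1 (m : ℕ) (hm : 1 ≤ m) : aC 1 (m+1) = 3 * aC 1 m + aC 2 m := by
  rcases eq_or_lt_of_le hm with rfl | h2
  · rw [aC_of_le (by omega) (by omega), aC_of_le (by omega) (by omega), aC_eq_zero (by omega)]
    norm_num
  · obtain ⟨e, rfl⟩ : ∃ e, m = e+2 := ⟨m - 2, by omega⟩
    rw [aC_of_le (by omega) (by omega), aC_of_le (by omega) (by omega),
      aC_of_le (by omega) (by omega)]
    have e1 : (e+2+1) - 1 = e+2 := by omega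
    have e2 : 2*(e+2+1) - 1 = (2*e+3)+2 := by omega
    have e3 : (e+2) - 1 = e+1 := by omega
    have e4 : (e+2) - 2 = e := by omega
    have e5 : 2*(e+2) - 1 = 2*e+3 := by omega
    rw [e1, e2, e3, e4, e5, pascal2]
    have hsymm : (2*e+3).choose (e+2) = (2*e+3).choose (e+1) := by
      have := Nat.choose_symm (n := 2*e+3) (k := e+1) (by omega)
      rw [show 2*e+3 - (e+1) = e+2 by omega] at this
      exact this
    omega

lemma succ_mul_catalan (m : ℕ) : (m+1) * catalan m = (2*m).choose m := by
  have h := catalan_eq_centralBinom_div m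
  have hd := Nat.succ_dvd_centralBinom m
  rw [h, Nat.mul_div_cancel' hd, Nat.centralBinom]

lemma cat_linkR (m : ℕ) (hm : 1 ≤ m) : (aC 1 m : ℝ) = catalan m + (aC 2 m : ℝ) := by
  rcases eq_or_lt_of_le hm with rfl | h2
  · rw [aC_of_le (by omega) (by omega), aC_eq_zero (by omega)]
    norm_num
  obtain ⟨e, rfl⟩ : ∃ e, m = e+2 := ⟨m - 2, by omega⟩
  rw [aC_of_le (by omega) (by omega), aC_of_le (by omega) (by omega)]
  rw [show (e+2) - 1 = e+1 by omega, show (e+2) - 2 = e by omega,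
    show 2*(e+2) - 1 = 2*e+3 by omega]
  have g1 := Nat.add_one_mul_choose_eq (2*e+3) (e+1)
  rw [show 2*e+3+1 = 2*e+4 by ring,
    show e+1+1 = e+2 by ring] at g1
  have g2 := Nat.add_one_mul_choose_eq (2*e+3) e
  rw [show 2*e+3+1 = 2*e+4 by ring] at g2
  have g3 := Nat.choose_succ_right_eq (2*e+4) (e+1)
  rw [show e+1+1 = e+2 by ring, show 2*e+4 - (e+1) = e+3 by omega] at g3
  have g4 := succ_mul_catalan (e+2)
  rw [show 2*(e+2) = 2*e+4 by ring, show e+2+1 = e+3 by ring] at g4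
  have G1 : (2*(e:ℝ)+4) * ((2*e+3).choose (e+1) : ℝ) =
      ((2*e+4).choose (e+2) : ℝ) * ((e:ℝ)+2) := by exact_mod_cast g1
  have G2 : (2*(e:ℝ)+4) * ((2*e+3).choose e : ℝ) =
      ((2*e+4).choose (e+1) : ℝ) * ((e:ℝ)+1) := by exact_mod_cast g2
  have G3 : ((2*e+4).choose (e+2) : ℝ) * ((e:ℝ)+2) =
      ((2*e+4).choose (e+1) : ℝ) * ((e:ℝ)+3) := by exact_mod_cast g3
  have G4 : ((e:ℝ)+3) * (catalan (e+2) : ℝ) = ((2*e+4).choose (e+2) : ℝ) := by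
    exact_mod_cast g4
  have hpos : ((2*(e:ℝ)+4)*((e:ℝ)+3)) ≠ 0 := by positivity
  apply mul_left_cancel₀ hpos
  linear_combination ((e:ℝ)+3)*G1 - ((e:ℝ)+3)*G2 + ((e:ℝ)+1)*G3 - (2*(e:ℝ)+4)*G4

lemma L1C (n k : ℕ) (hk : k ≤ n) :
    ((n:ℝ)+1) * (aC (k+1) (n+1) : ℝ) =
      ((k:ℝ)+1) * (((2*(n+1)).choose (n-k) : ℕ) : ℝ) + ((n:ℝ)+1) * (aC (k+2) (n+1) : ℝ) := by
  rcases eq_or_lt_of_le hk with rfl | h2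
  · rw [aC_of_le (by omega) (by omega), aC_eq_zero (by omega),
      show (k+1) - (k+1) = 0 by omega, show k - k = 0 by omega,
      Nat.choose_zero_right, Nat.choose_zero_right]
    push_cast; ring
  obtain ⟨e, rfl⟩ : ∃ e, n = k+1+e := ⟨n - k - 1, by omega⟩
  rw [aC_of_le (by omega) (by omega), aC_of_le (by omega) (by omega)]
  rw [show (k+1+e+1) - (k+1) = e+1 by omega, show (k+1+e+1) - (k+2) = e by omega,
    show 2*(k+1+e+1) - 1 = 2*k+2*e+3 by omega, show (k+1+e) - k = e+1 by omega,
    show 2*(k+1+e+1) = 2*k+2*e+4 by ring]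
  have f1 := Nat.add_one_mul_choose_eq (2*k+2*e+3) e
  rw [show 2*k+2*e+3+1 = 2*k+2*e+4 by ring] at f1
  have f2 := Nat.choose_symm (n := 2*k+2*e+3) (k := e+1) (by omega)
  rw [show 2*k+2*e+3 - (e+1) = 2*k+e+2 by omega] at f2
  have f3 := Nat.add_one_mul_choose_eq (2*k+2*e+3) (2*k+e+2)
  rw [show 2*k+2*e+3+1 = 2*k+2*e+4 by ring,
    show 2*k+e+2+1 = 2*k+e+3 by ring] at f3
  have f4 := Nat.choose_symm (n := 2*k+2*e+4) (k := 2*k+e+3) (by omega)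
  rw [show 2*k+2*e+4 - (2*k+e+3) = e+1 by omega] at f4
  rw [f2] at f3
  rw [← f4] at f3
  have F1 : (2*(k:ℝ)+2*(e:ℝ)+4) * ((2*k+2*e+3).choose e : ℝ) =
      ((2*k+2*e+4).choose (e+1) : ℝ) * ((e:ℝ)+1) := by exact_mod_cast f1
  have F3 : (2*(k:ℝ)+2*(e:ℝ)+4) * ((2*k+2*e+3).choose (e+1) : ℝ) =
      ((2*k+2*e+4).choose (e+1) : ℝ) * (2*(k:ℝ)+(e:ℝ)+3) := by exact_mod_cast f3
  have h2 : (2:ℝ) ≠ 0 := two_ne_zero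
  apply mul_left_cancel₀ h2
  push_cast
  linear_combination F3 - F1

lemma pochR_succ (a : ℝ) (k : ℕ) : pochR a (k+1) = pochR a k * (a + k) :=
  Finset.prod_range_succ _ _

lemma pochR_shift_fact (j m : ℕ) :
    pochR ((j:ℝ)+2) m * ((j+1).factorial : ℝ) = ((j+1+m).factorial : ℝ) := by
  induction m with
  | zero => simp [pochR]
  | succ m ih =>
    rw [pochR_succ, show j+1+(m+1) = (j+1+m)+1 by ring, Nat.factorial_succ (j+1+m)]
    push_cast
    push_cast at ih
    linear_combination ((j:ℝ)+2+(m:ℝ)) * ih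

lemma abs_pochR_neg (n j : ℕ) (hj : j ≤ n) : |pochR (-(n:ℝ)) j| ≤ (n:ℝ)^j := by
  rw [pochR, Finset.abs_prod]
  calc ∏ i ∈ range j, |(-(n:ℝ) + i)|
      ≤ ∏ _i ∈ range j, (n:ℝ) := by
        apply Finset.prod_le_prod (fun i _ => abs_nonneg _)
        intro i hi
        have hi' : (i:ℝ) ≤ n := by
          have : i < j := Finset.mem_range.1 hi
          exact_mod_cast le_of_lt (lt_of_lt_of_le this hj)
        rw [abs_of_nonpos (by linarith)]
        linarith
    _ = (n:ℝ)^j := by rw [Finset.prod_const, Finset.card_range]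

lemma Lag_abs_le (n : ℕ) (x : ℝ) (hx : 0 ≤ x) :
    |Lag n 1 x| ≤ ((n:ℝ)+1) * Real.exp (2 * Real.sqrt (n*x)) := by
  set y := Real.sqrt ((n:ℝ)*x) with hy
  have hy0 : 0 ≤ y := Real.sqrt_nonneg _
  have hyy : y*y = (n:ℝ)*x := Real.mul_self_sqrt (by positivity)
  have hexp : ∀ j : ℕ, y^j / (j.factorial : ℝ) ≤ Real.exp y := fun j =>
    Real.pow_div_factorial_le_exp (x := y) hy0 j
  have hsum : ∑ j ∈ range (n+1), y^j/(j.factorial : ℝ) ≤ Real.exp y :=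
    Real.sum_le_exp_of_nonneg hy0 (n+1)
  have hterm : ∀ j ∈ range (n+1),
      |pochR (-(n : ℝ)) j / (j.factorial : ℝ) * pochR (1 + (j:ℝ) + 1) (n - j) * x ^ j|
        ≤ (n.factorial : ℝ) * (((n:ℝ)+1) * (Real.exp y * (y^j/(j.factorial : ℝ)))) := by
    intro j hj
    have hjn : j ≤ n := by have := Finset.mem_range.1 hj; omega
    have h2 : (1 + (j:ℝ) + 1) = ((j:ℝ)+2) := by ring
    rw [h2]
    have hB : pochR ((j:ℝ)+2) (n-j) = ((n+1).factorial : ℝ) / ((j+1).factorial : ℝ) := by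
      have h := pochR_shift_fact j (n-j)
      rw [show j+1+(n-j) = n+1 by omega] at h
      have hfpos : (0:ℝ) < ((j+1).factorial : ℝ) := by positivity
      field_simp
      linarith [h]
    rw [abs_mul, abs_mul, hB]
    have hxj : |x^j| = x^j := abs_of_nonneg (by positivity)
    have hBnn : |((n+1).factorial : ℝ) / ((j+1).factorial : ℝ)|
        = ((n+1).factorial : ℝ) / ((j+1).factorial : ℝ) := abs_of_nonneg (by positivity)
    rw [hxj, hBnn, abs_div, Nat.abs_cast]
    have hA : |pochR (-(n:ℝ)) j| ≤ (n:ℝ)^j := abs_pochR_neg n j hjn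
    have step1 : |pochR (-(n:ℝ)) j| / (j.factorial : ℝ) *
          (((n+1).factorial : ℝ) / ((j+1).factorial : ℝ)) * x^j
        ≤ (n:ℝ)^j / (j.factorial : ℝ) * (((n+1).factorial : ℝ) / ((j+1).factorial : ℝ)) * x^j := by
      gcongr
    have step2 : (n:ℝ)^j / (j.factorial : ℝ) * (((n+1).factorial : ℝ) / ((j+1).factorial : ℝ)) * x^j
        = (n.factorial : ℝ) * (((n:ℝ)+1) * ((y^j/(j.factorial:ℝ)) * (y^j/((j+1).factorial : ℝ)))) := by
      have h3 : ((n+1).factorial : ℝ) = ((n:ℝ)+1) * (n.factorial : ℝ) := by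
        rw [Nat.factorial_succ]; push_cast; ring
      have h4 : (n:ℝ)^j * x^j = y^j * y^j := by
        rw [← mul_pow, ← mul_pow, hyy]
      have hf1 : (0:ℝ) < (j.factorial : ℝ) := by positivity
      have hf2 : (0:ℝ) < ((j+1).factorial : ℝ) := by positivity
      rw [h3]
      field_simp
      linear_combination h4
    have step3 : y^j/((j+1).factorial : ℝ) ≤ Real.exp y := by
      calc y^j/((j+1).factorial : ℝ) ≤ y^j/(j.factorial : ℝ) :=
            div_le_div_of_nonneg_left (by positivity) (by positivity)
              (by exact_mod_cast Nat.factorial_le (Nat.le_succ j))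
        _ ≤ Real.exp y := hexp j
    calc |pochR (-(n:ℝ)) j| / (j.factorial : ℝ) *
          (((n+1).factorial : ℝ) / ((j+1).factorial : ℝ)) * x^j
        ≤ (n.factorial : ℝ) * (((n:ℝ)+1) * ((y^j/(j.factorial:ℝ)) * (y^j/((j+1).factorial : ℝ)))) := by
          rw [← step2]; exact step1
      _ ≤ (n.factorial : ℝ) * (((n:ℝ)+1) * ((y^j/(j.factorial:ℝ)) * Real.exp y)) := by
          have hb : (0:ℝ) ≤ y^j/(j.factorial:ℝ) := by positivity
          gcongr
      _ = (n.factorial : ℝ) * (((n:ℝ)+1) * (Real.exp y * (y^j/(j.factorial : ℝ)))) := by ring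
  have habs : |Lag n 1 x| ≤ (1/(n.factorial:ℝ)) * ∑ j ∈ range (n+1),
      |pochR (-(n : ℝ)) j / (j.factorial : ℝ) * pochR (1 + (j:ℝ) + 1) (n - j) * x ^ j| := by
    rw [Lag, abs_mul, abs_of_nonneg (show (0:ℝ) ≤ 1/(n.factorial:ℝ) by positivity)]
    exact mul_le_mul_of_nonneg_left (Finset.abs_sum_le_sum_abs _ _) (by positivity)
  calc |Lag n 1 x|
      ≤ (1/(n.factorial:ℝ)) * ∑ j ∈ range (n+1),
          |pochR (-(n : ℝ)) j / (j.factorial : ℝ) * pochR (1 + (j:ℝ) + 1) (n - j) * x ^ j| := habs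
    _ ≤ (1/(n.factorial:ℝ)) * ∑ j ∈ range (n+1),
          (n.factorial : ℝ) * (((n:ℝ)+1) * (Real.exp y * (y^j/(j.factorial : ℝ)))) := by
        apply mul_le_mul_of_nonneg_left _ (by positivity)
        exact Finset.sum_le_sum hterm
    _ = ((n:ℝ)+1) * (Real.exp y * ∑ j ∈ range (n+1), y^j/(j.factorial : ℝ)) := by
        have hf : (0:ℝ) < (n.factorial : ℝ) := by positivity
        rw [← Finset.mul_sum, ← mul_assoc, one_div, inv_mul_cancel₀ (ne_of_gt hf), one_mul,
          ← Finset.mul_sum, ← Finset.mul_sum]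
    _ ≤ ((n:ℝ)+1) * (Real.exp y * Real.exp y) := by
        have h0 : (0:ℝ) < Real.exp y := Real.exp_pos y
        gcongr
    _ = ((n:ℝ)+1) * Real.exp (2*y) := by
        rw [← Real.exp_add]; ring_nf

lemma catalan_le_four_pow (m : ℕ) : (catalan m : ℝ) ≤ 4^m := by
  cases m with
  | zero => norm_num
  | succ m =>
    have h := cat_linkR (m+1) (by omega)
    have h2 : (aC 1 (m+1) : ℝ) ≤ 4^(m+1) := by exact_mod_cast aC_le 1 (m+1)
    have h3 : (0:ℝ) ≤ (aC 2 (m+1) : ℝ) := by positivity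
    linarith

lemma norm_natmul_pow_le {c : ℕ} {x : ℂ} (h : (c:ℝ) ≤ 4^m) (m' : ℕ) : True := trivial

lemma aC_summable {x : ℂ} (hx : ‖x‖ < 1/8) (k : ℕ) :
    Summable (fun m => (aC k m : ℂ) * x^m) := by
  apply Summable.of_norm_bounded (g := fun m => (4 * ‖x‖)^m)
  · exact summable_geometric_of_lt_one (by positivity) (by linarith)
  · intro m
    rw [norm_mul, norm_pow, Complex.norm_natCast, mul_pow]
    have : (aC k m : ℝ) ≤ 4^m := by exact_mod_cast aC_le k m
    gcongr

lemma cat_summable_norm {x : ℂ} (hx : ‖x‖ < 1/8) :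
    Summable (fun m => ‖(catalan m : ℂ) * x^m‖) := by
  apply Summable.of_norm_bounded (g := fun m => (4 * ‖x‖)^m)
  · exact summable_geometric_of_lt_one (by positivity) (by linarith)
  · intro m
    rw [norm_norm, norm_mul, norm_pow, Complex.norm_natCast, mul_pow]
    gcongr
    exact catalan_le_four_pow m

lemma shift_hasSum {f : ℕ → ℂ} {a : ℂ} (hf : HasSum f a) (h0 : f 0 = 0) :
    HasSum (fun n => f (n+1)) a := by
  refine (hasSum_nat_add_iff 1).mpr ?_
  simpa [h0] using hf

lemma catGF {z : ℂ} (hz : ‖z‖ < 1/2)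
    (hxa : ‖z/(1+z)^2‖ < 1/12) :
    HasSum (fun m => (catalan m : ℂ) * (z/(1+z)^2)^m) (1+z) := by
  set x := z/(1+z)^2 with hxdef
  have habs1z : (1:ℝ)/2 ≤ ‖1+z‖ := by
    have h := norm_add_le (1+z) (-z)
    simp only [add_neg_cancel_right, norm_one, norm_neg] at h
    linarith
  have h1z : (1+z) ≠ 0 := by
    intro h
    rw [h] at habs1z; simp at habs1z; linarith
  have hx8 : ‖x‖ < 1/8 := lt_trans hxa (by norm_num)
  have hnorm := cat_summable_norm hx8
  obtain ⟨φ, hφ⟩ := hnorm.of_norm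
  have hC := hasSum_sum_range_mul_of_summable_norm hnorm hnorm
  rw [hφ.tsum_eq] at hC
  have hCeq : (fun n => ∑ k ∈ Finset.range (n+1),
      ((catalan k:ℂ)*x^k)*((catalan (n-k):ℂ)*x^(n-k)))
      = fun n => (catalan (n+1) : ℂ) * x^n := by
    funext n
    have hterm : ∀ k ∈ Finset.range (n+1), ((catalan k:ℂ)*x^k)*((catalan (n-k):ℂ)*x^(n-k))
        = ((catalan k * catalan (n-k) : ℕ) : ℂ) * x^n := by
      intro k hk
      have hk' : k ≤ n := by have := Finset.mem_range.1 hk; omega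
      rw [show x^n = x^k * x^(n-k) by rw [← pow_add]; congr 1; omega]
      push_cast; ring
    rw [Finset.sum_congr rfl hterm, ← Finset.sum_mul]
    congr 1
    have hcat : catalan (n+1) = ∑ k ∈ Finset.range (n+1), catalan k * catalan (n-k) := by
      rw [catalan_succ' n, Finset.Nat.sum_antidiagonal_eq_sum_range_succ_mk]
    rw [hcat]
    push_cast
    rfl
  rw [hCeq] at hC
  have hxmul := hC.mul_left x
  have hxeq : (fun n => x * ((catalan (n+1):ℂ) * x^n))
      = fun n => (catalan (n+1):ℂ) * x^(n+1) := funext fun n => by ring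
  rw [hxeq] at hxmul
  have hshift : HasSum (fun n => (catalan (n+1):ℂ) * x^(n+1)) (φ - 1) := by
    refine (hasSum_nat_add_iff (f := fun n => (catalan n : ℂ) * x^n) 1).mpr ?_
    have he : φ - 1 + ∑ i ∈ Finset.range 1, (catalan i : ℂ) * x ^ i = φ := by
      simp
    rw [he]
    exact hφ
  have hkey : φ - 1 = x * (φ*φ) := hshift.unique hxmul
  have hφ1 : ‖φ - 1‖ ≤ 1/2 := by
    have hsn : Summable (fun n => ‖(catalan (n+1):ℂ) * x^(n+1)‖) :=
      (summable_nat_add_iff 1).mpr hnorm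
    have hge : HasSum (fun n : ℕ => (1/3:ℝ)^(n+1)) (1/2) := by
      have h0 := hasSum_geometric_of_lt_one (show (0:ℝ) ≤ 1/3 by norm_num)
        (show (1/3:ℝ) < 1 by norm_num)
      have h1 := h0.mul_left (1/3 : ℝ)
      have he : (fun n : ℕ => (1/3:ℝ) * (1/3)^n) = fun n : ℕ => (1/3:ℝ)^(n+1) :=
        funext fun n => by rw [pow_succ]; ring
      rw [he] at h1
      rwa [show (1/3:ℝ) * (1 - 1/3)⁻¹ = 1/2 by norm_num] at h1
    calc ‖φ - 1‖ = ‖φ - 1‖ := rfl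
      _ = ‖∑' n, (catalan (n+1):ℂ) * x^(n+1)‖ := by rw [hshift.tsum_eq]
      _ ≤ ∑' n, ‖(catalan (n+1):ℂ) * x^(n+1)‖ := norm_tsum_le_tsum_norm hsn
      _ ≤ ∑' n : ℕ, (1/3:ℝ)^(n+1) := by
          apply Summable.tsum_le_tsum _ hsn hge.summable
          intro n
          rw [norm_mul, norm_pow, Complex.norm_natCast]
          calc (catalan (n+1) : ℝ) * ‖x‖ ^ (n+1)
              ≤ 4^(n+1) * ‖x‖ ^(n+1) := by
                gcongr; exact catalan_le_four_pow (n+1)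
            _ = (4*‖x‖)^(n+1) := by rw [mul_pow]
            _ ≤ (1/3)^(n+1) := by
                apply pow_le_pow_left₀ (by positivity) (by linarith)
      _ = 1/2 := hge.tsum_eq
  have hφabs : ‖φ‖ ≤ 3/2 := by
    calc ‖φ‖ = ‖(φ - 1) + 1‖ := by congr 1; ring
      _ ≤ ‖φ-1‖ + ‖1‖ := norm_add_le _ _
      _ ≤ 1/2 + 1 := by rw [norm_one]; linarith
      _ = 3/2 := by norm_num
  have hz_eq : x * (1+z)^2 = z := by
    rw [hxdef]
    field_simp
  have hfactor : (φ - (1+z)) * (x*(φ + (1+z)) - 1) = 0 := by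
    linear_combination (-1 : ℂ) * hkey - hz_eq
  have habs1z2 : ‖1+z‖ ≤ 3/2 := by
    calc ‖1+z‖ ≤ ‖1‖ + ‖z‖ := norm_add_le _ _
      _ ≤ 1 + 1/2 := by rw [norm_one]; linarith
      _ = 3/2 := by norm_num
  have hsecond : x*(φ + (1+z)) - 1 ≠ 0 := by
    intro h
    have he : x*(φ + (1+z)) = 1 := by linear_combination h
    have habs1 : ‖x*(φ + (1+z))‖ = 1 := by rw [he, norm_one]
    have h2 : ‖φ + (1+z)‖ ≤ 3 := by
      calc ‖φ + (1+z)‖ ≤ ‖φ‖ + ‖1+z‖ :=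
            norm_add_le _ _
        _ ≤ 3/2 + 3/2 := by linarith
        _ = 3 := by norm_num
    have hb : ‖x*(φ + (1+z))‖ ≤ (1/12)*3 := by
      rw [norm_mul]
      exact mul_le_mul (le_of_lt hxa) h2 (norm_nonneg _) (by norm_num)
    rw [habs1] at hb
    norm_num at hb
  have hfin : φ = 1+z := by
    rcases mul_eq_zero.1 hfactor with h | h
    · exact sub_eq_zero.1 h
    · exact absurd h hsecond
  rw [← hfin]
  exact hφ

lemma gSeries {z : ℂ} (hz : ‖z‖ < 1/2) (hz0 : z ≠ 0)
    (hxa : ‖z/(1+z)^2‖ < 1/12) (k : ℕ) :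
    HasSum (fun m => ((aC (k+1) m : ℂ) - (aC (k+2) m : ℂ)) * (z/(1+z)^2)^m) (z^(k+1)) := by
  set x := z/(1+z)^2 with hxdef
  have habs1z : (1:ℝ)/2 ≤ ‖1+z‖ := by
    have h := norm_add_le (1+z) (-z)
    simp only [add_neg_cancel_right, norm_one, norm_neg] at h
    linarith
  have h1z : (1+z) ≠ 0 := by
    intro h
    rw [h] at habs1z; simp at habs1z; linarith
  have hx0 : x ≠ 0 := by
    rw [hxdef]
    exact div_ne_zero hz0 (pow_ne_zero 2 h1z)
  have hz1 : (1:ℂ) - z ≠ 0 := by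
    intro h
    have : z = 1 := by linear_combination -h
    rw [this] at hz; simp at hz; linarith
  have hzx : x * (1+z)^2 = z := by rw [hxdef]; field_simp
  have hx8 : ‖x‖ < 1/8 := lt_trans hxa (by norm_num)
  have hsum : ∀ j, Summable (fun m => (aC j m : ℂ) * x^m) := aC_summable hx8
  set τ : ℕ → ℂ := fun j => ∑' m, (aC j m : ℂ) * x^m with hτdef
  have hτ : ∀ j, HasSum (fun m => (aC j m : ℂ) * x^m) (τ j) := fun j => (hsum j).hasSum
  have hshift : ∀ j, HasSum (fun m => (aC j (m+1) : ℂ) * x^m) (τ j / x) := by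
    intro j
    have h1 : HasSum (fun m => (aC j (m+1) : ℂ) * x^(m+1)) (τ j) := by
      apply shift_hasSum (hτ j)
      simp [aC_zero]
    have h2 := h1.div_const x
    have he : (fun m => (aC j (m+1) : ℂ) * x^(m+1) / x) = fun m => (aC j (m+1) : ℂ) * x^m := by
      funext m; rw [pow_succ]; field_simp
    rwa [he] at h2
  have hrec : ∀ j, τ (j+3) = τ (j+2)/x - τ (j+1) - 2*τ (j+2) := by
    intro j
    have h1 : HasSum (fun m => (aC (j+2) (m+1) : ℂ) * x^m
        - (aC (j+1) m : ℂ) * x^m - 2*((aC (j+2) m : ℂ) * x^m))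
        (τ (j+2)/x - τ (j+1) - 2*τ (j+2)) :=
      ((hshift (j+2)).sub (hτ (j+1))).sub ((hτ (j+2)).mul_left 2)
    have he : (fun m => (aC (j+2) (m+1) : ℂ) * x^m - (aC (j+1) m : ℂ) * x^m
        - 2*((aC (j+2) m : ℂ) * x^m)) = fun m => (aC (j+3) m : ℂ) * x^m := by
      funext m
      have hc : (aC (j+2) (m+1) : ℂ) = (aC (j+1) m : ℂ) + 2*(aC (j+2) m :ℂ) + (aC (j+3) m : ℂ) := by
        exact_mod_cast rec2 j m
      rw [hc]; ring
    rw [he] at h1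
    exact (hτ (j+3)).unique h1
  have hind : HasSum (fun m : ℕ => if m = 0 then (1:ℂ) else 0) 1 := by
    have h := hasSum_single (f := fun m : ℕ => if m = 0 then (1:ℂ) else 0) 0
      (fun b hb => if_neg hb)
    simpa using h
  have hτ2 : τ 2 = τ 1/x - 3*τ 1 - 1 := by
    have h1 : HasSum (fun m => (aC 1 (m+1) : ℂ) * x^m - 3*((aC 1 m : ℂ) * x^m)
        - (if m = 0 then (1:ℂ) else 0)) (τ 1/x - 3*τ 1 - 1) :=
      ((hshift 1).sub ((hτ 1).mul_left 3)).sub hind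
    have he : (fun m => (aC 1 (m+1) : ℂ) * x^m - 3*((aC 1 m : ℂ) * x^m)
        - (if m = 0 then (1:ℂ) else 0)) = fun m => (aC 2 m : ℂ) * x^m := by
      funext m
      cases m with
      | zero =>
        have h11 : aC 1 1 = 1 := by decide
        have h10 : aC 1 0 = 0 := aC_zero 1
        have h20 : aC 2 0 = 0 := aC_zero 2
        simp [h11, h10, h20]
      | succ m =>
        have hc : (aC 1 (m+2) : ℂ) = 3*(aC 1 (m+1) : ℂ) + (aC 2 (m+1) : ℂ) := by
          exact_mod_cast rec1 (m+1) (by omega)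
        simp only [if_neg (Nat.succ_ne_zero m)]
        rw [show m+1+1 = m+2 from rfl, hc]; ring
    rw [he] at h1
    exact (hτ 2).unique h1
  have hcat := catGF hz hxa
  have hS1 : τ 1 - τ 2 = z := by
    have h1 : HasSum (fun m => (aC 1 m : ℂ)*x^m - (aC 2 m : ℂ)*x^m) (τ 1 - τ 2) :=
      (hτ 1).sub (hτ 2)
    have h2 : HasSum (fun m => (catalan m : ℂ) * x^m - (if m = 0 then (1:ℂ) else 0))
        ((1+z) - 1) := hcat.sub hind
    have he : (fun m => (aC 1 m : ℂ)*x^m - (aC 2 m :ℂ)*x^m)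
        = (fun m => (catalan m : ℂ) * x^m - (if m = 0 then (1:ℂ) else 0)) := by
      funext m
      cases m with
      | zero => simp [aC_zero]
      | succ m =>
        have hc : (aC 1 (m+1) : ℂ) = (catalan (m+1) : ℂ) + (aC 2 (m+1) : ℂ) := by
          exact_mod_cast cat_linkR (m+1) (by omega)
        simp only [if_neg (Nat.succ_ne_zero m)]
        rw [hc]; ring
    rw [he] at h1
    have h2' : HasSum (fun m => (catalan m : ℂ) * x^m - (if m = 0 then (1:ℂ) else 0)) z := by
      have : (1+z) - 1 = z := by ring
      rwa [this] at h2
    exact h1.unique h2'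
  have h4 : (4*x - 1) * (1+z)^2 = -(1-z)^2 := by
    rw [hxdef]; field_simp; ring
  have hτ1v : τ 1 = z/(1-z) := by
    have h2 : τ 1 - (τ 1/x - 3*τ 1 - 1) = z := by rw [← hτ2]; exact hS1
    have hdiv : τ 1 / x * x = τ 1 := div_mul_cancel₀ _ hx0
    have heq : τ 1 * (4*x - 1) = (z-1)*x := by linear_combination x * h2 + hdiv
    have h5 : τ 1 * (1-z) * (1-z) = z * (1-z) := by
      linear_combination τ 1 * h4 - (1+z)^2 * heq + (1-z) * hzx
    have h6 : τ 1 * (1-z) = z := mul_right_cancel₀ hz1 h5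
    rw [eq_div_iff hz1]
    exact h6
  have hτ2v : τ 2 = z^2/(1-z) := by
    rw [hτ2, hτ1v, hxdef]
    field_simp
    ring
  have hval : ∀ j, τ (j+1) = z^(j+1)/(1-z) ∧ τ (j+2) = z^(j+2)/(1-z) := by
    intro j
    induction j with
    | zero =>
      constructor
      · rw [hτ1v]; norm_num
      · exact hτ2v
    | succ j ih =>
      refine ⟨ih.2, ?_⟩
      have h7 : τ (j+1+2) = τ (j+3) := by norm_num
      rw [h7, hrec j, ih.1, ih.2, hxdef]
      field_simp
      ring
  have h1 : HasSum (fun m => (aC (k+1) m : ℂ)*x^m - (aC (k+2) m : ℂ)*x^m)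
      (τ (k+1) - τ (k+2)) := (hτ (k+1)).sub (hτ (k+2))
  have hv : τ (k+1) - τ (k+2) = z^(k+1) := by
    rw [(hval k).1, (hval k).2]
    field_simp
    ring
  rw [hv] at h1
  have he : (fun m => (aC (k+1) m : ℂ)*x^m - (aC (k+2) m : ℂ)*x^m)
      = fun m => ((aC (k+1) m : ℂ) - (aC (k+2) m : ℂ)) * x^m := by
    funext m; ring
  rwa [he] at h1

theorem stmt12 (t : ℝ) (ht : 0 < t) :
    ∃ δ > 0, ∀ z : ℂ, ‖z‖ < δ → ∃ S : ℂ,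
      HasSum (fun n : ℕ => ((b0coef t (n + 1) : ℝ) : ℂ) / (((n : ℂ) + 1) * 4 ^ (n + 1)) *
        (4 * z / (1 + z) ^ 2) ^ (n + 1)) S ∧
      HasSum (fun n : ℕ => 2 * (1 / ((n : ℂ) + 1)) * Complex.exp (-((n : ℂ) + 1) * t) *
        ((Lag n 1 (2 * ((n : ℝ) + 1) * t) : ℝ) : ℂ) * z ^ (n + 1)) S := by
  set M := Real.exp (2*Real.sqrt (2*t)) with hMdef
  have hM1 : (1:ℝ) ≤ M := Real.one_le_exp (by positivity)
  have hMpos : (0:ℝ) < M := by linarith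
  refine ⟨min (1/2) (1/(64*M)), by positivity, ?_⟩
  intro z hzδ
  rcases eq_or_ne z 0 with rfl | hz0
  · refine ⟨0, ?_, ?_⟩
    · have he : (fun n : ℕ => ((b0coef t (n + 1) : ℝ) : ℂ) / (((n : ℂ) + 1) * 4 ^ (n + 1)) *
          (4 * (0:ℂ) / (1 + 0) ^ 2) ^ (n + 1)) = fun _ => (0:ℂ) := by
        funext n; simp
      rw [he]; exact hasSum_zero
    · have he : (fun n : ℕ => 2 * (1 / ((n : ℂ) + 1)) * Complex.exp (-((n : ℂ) + 1) * t) *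
          ((Lag n 1 (2 * ((n : ℝ) + 1) * t) : ℝ) : ℂ) * (0:ℂ) ^ (n + 1)) = fun _ => (0:ℂ) := by
        funext n; simp
      rw [he]; exact hasSum_zero
  -- main case z ≠ 0
  have hδ1 : ‖z‖ < 1/2 := lt_of_lt_of_le hzδ (min_le_left _ _)
  have hδ2 : ‖z‖ < 1/(64*M) := lt_of_lt_of_le hzδ (min_le_right _ _)
  set x := z/(1+z)^2 with hxdef
  have habs1z : (1:ℝ)/2 ≤ ‖1+z‖ := by
    have h := norm_add_le (1+z) (-z)
    simp only [add_neg_cancel_right, norm_one, norm_neg] at h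
    linarith
  have h1z : (1+z) ≠ 0 := by
    intro h
    rw [h] at habs1z; simp at habs1z; linarith
  have hxabs : ‖x‖ ≤ 4*‖z‖ := by
    rw [hxdef, norm_div, norm_pow]
    rw [div_le_iff₀ (by positivity)]
    have h14 : (1:ℝ)/4 ≤ ‖1+z‖^2 := by nlinarith [habs1z]
    nlinarith [norm_nonneg z, h14]
  have hx16 : ‖x‖ < 1/(16*M) := by
    calc ‖x‖ ≤ 4*‖z‖ := hxabs
      _ < 4*(1/(64*M)) := by linarith
      _ = 1/(16*M) := by field_simp; ring
  have hx12 : ‖x‖ < 1/12 := by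
    have h1 : 1/(16*M) ≤ 1/16 := by
      apply div_le_div_of_nonneg_left (by norm_num) (by norm_num)
      linarith
    linarith
  -- the coefficient sequence
  set cc : ℕ → ℝ := fun K => Real.exp (-(K:ℝ)*t) * Lag (K-1) 1 (2*(K:ℝ)*t) with hccdef
  have hcck : ∀ k : ℕ, cc (k+1) = Real.exp (-((k:ℝ)+1)*t) * Lag k 1 (2*((k:ℝ)+1)*t) := by
    intro k
    rw [hccdef]
    simp only [Nat.add_sub_cancel]
    push_cast
    ring_nf
  have hccb : ∀ k : ℕ, |cc (k+1)| ≤ ((k:ℝ)+1)*M^(k+1) := by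
    intro k
    rw [hcck k, abs_mul, abs_of_pos (Real.exp_pos _)]
    have harg : (0:ℝ) ≤ 2*((k:ℝ)+1)*t := by positivity
    have hLag := Lag_abs_le k (2*((k:ℝ)+1)*t) harg
    have hsq : Real.sqrt ((k:ℝ)*(2*((k:ℝ)+1)*t)) ≤ ((k:ℝ)+1)*Real.sqrt (2*t) := by
      have h1 : (k:ℝ)*(2*((k:ℝ)+1)*t) ≤ ((k:ℝ)+1)^2*(2*t) := by
        nlinarith [(Nat.cast_nonneg k : (0:ℝ) ≤ (k:ℝ)), ht.le]
      calc Real.sqrt ((k:ℝ)*(2*((k:ℝ)+1)*t)) ≤ Real.sqrt (((k:ℝ)+1)^2*(2*t)) :=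
            Real.sqrt_le_sqrt h1
        _ = ((k:ℝ)+1)*Real.sqrt (2*t) := by
            rw [Real.sqrt_mul (by positivity), Real.sqrt_sq (by positivity)]
    have hMk : M^(k+1) = Real.exp (((k:ℝ)+1)*(2*Real.sqrt (2*t))) := by
      rw [hMdef, ← Real.exp_nat_mul]
      congr 1
      push_cast
      ring
    have hexp1 : Real.exp (-((k:ℝ)+1)*t) ≤ 1 := by
      apply Real.exp_le_one_iff.mpr
      nlinarith [ht.le]
    calc Real.exp (-((k:ℝ)+1)*t) * |Lag k 1 (2*((k:ℝ)+1)*t)|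
        ≤ 1 * (((k:ℝ)+1) * Real.exp (2 * Real.sqrt ((k:ℝ)*(2*((k:ℝ)+1)*t)))) := by
          apply mul_le_mul hexp1 hLag (abs_nonneg _) (by norm_num)
      _ = ((k:ℝ)+1) * Real.exp (2 * Real.sqrt ((k:ℝ)*(2*((k:ℝ)+1)*t))) := by ring
      _ ≤ ((k:ℝ)+1) * Real.exp (((k:ℝ)+1)*(2*Real.sqrt (2*t))) := by
          apply mul_le_mul_of_nonneg_left (Real.exp_le_exp.mpr (by nlinarith [hsq]))
            (by positivity)
      _ = ((k:ℝ)+1)*M^(k+1) := by rw [hMk]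
  -- the double-indexed family
  set F : ℕ×ℕ → ℂ := fun p => (2*((cc (p.1+1) : ℝ):ℂ)/((p.1:ℂ)+1)) *
    (((aC (p.1+1) (p.2+1) : ℂ) - (aC (p.1+2) (p.2+1) : ℂ)) * x^(p.2+1)) with hFdef
  set s := Real.sqrt (4*M*‖x‖) with hsdef
  have hxnn : 0 ≤ ‖x‖ := norm_nonneg _
  have hs0 : 0 ≤ s := Real.sqrt_nonneg _
  have hss : s*s = 4*M*‖x‖ := Real.mul_self_sqrt (by positivity)
  have hs2 : s < 1/2 := by
    have h1 : 4*M*‖x‖ < 1/4 := by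
      calc 4*M*‖x‖ < 4*M*(1/(16*M)) := by
            apply mul_lt_mul_of_pos_left hx16 (by positivity)
        _ = 1/4 := by field_simp; ring
    have h2 := Real.sqrt_lt_sqrt (by positivity) h1
    rw [hsdef]
    rwa [show (1/4:ℝ) = (1/2)^2 by norm_num, Real.sqrt_sq (by norm_num)] at h2
  have hs1 : s < 1 := by linarith
  have hFbound : ∀ p : ℕ×ℕ, ‖F p‖ ≤ (2*s^(p.1+1)) * s^(p.2+1) := by
    rintro ⟨k, n⟩
    rcases le_or_gt k n with hkn | hkn
    · have hk1 : (0:ℝ) < (k:ℝ)+1 := by positivity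
      have hknorm : ‖((k:ℂ)+1)‖ = (k:ℝ)+1 := by
        rw [show ((k:ℂ)+1) = ((k+1:ℕ):ℂ) by push_cast; ring, Complex.norm_natCast]
        push_cast; ring
      have hc1 : ‖(2*((cc (k+1) : ℝ):ℂ)/((k:ℂ)+1))‖ ≤ 2*M^(k+1) := by
        rw [norm_div, norm_mul, Complex.norm_real, Real.norm_eq_abs, hknorm]
        rw [div_le_iff₀ hk1]
        have h2n : ‖(2:ℂ)‖ = 2 := by norm_num
        rw [h2n]
        calc 2*|cc (k+1)| ≤ 2*(((k:ℝ)+1)*M^(k+1)) := by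
              apply mul_le_mul_of_nonneg_left (hccb k) (by norm_num)
          _ = 2*M^(k+1)*((k:ℝ)+1) := by ring
      have hdiffn : ‖((aC (k+1) (n+1) : ℂ) - (aC (k+2) (n+1) : ℂ))‖ ≤ 4^(n+1) := by
        rw [show ((aC (k+1) (n+1) : ℂ) - (aC (k+2) (n+1) : ℂ))
            = ((((aC (k+1) (n+1) : ℝ)) - ((aC (k+2) (n+1) : ℝ)) : ℝ) : ℂ) by push_cast; ring]
        rw [Complex.norm_real, Real.norm_eq_abs]
        have hA : (aC (k+1) (n+1) : ℝ) ≤ 4^(n+1) := by exact_mod_cast aC_le (k+1) (n+1)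
        have hB : (aC (k+2) (n+1) : ℝ) ≤ 4^(n+1) := by exact_mod_cast aC_le (k+2) (n+1)
        have hA0 : (0:ℝ) ≤ (aC (k+1) (n+1) : ℝ) := by positivity
        have hB0 : (0:ℝ) ≤ (aC (k+2) (n+1) : ℝ) := by positivity
        rw [abs_sub_le_iff]
        constructor <;> linarith
      have hxn : ‖x‖ = ‖x‖ := rfl
      calc ‖F (k,n)‖ = ‖(2*((cc (k+1) : ℝ):ℂ)/((k:ℂ)+1))‖ *
            (‖((aC (k+1) (n+1) : ℂ) - (aC (k+2) (n+1) : ℂ))‖ * ‖x‖^(n+1)) := by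
            rw [hFdef]; simp only [norm_mul, norm_pow]
        _ ≤ (2*M^(k+1)) * (4^(n+1) * ‖x‖^(n+1)) := by
            apply mul_le_mul hc1 _ (by positivity) (by positivity)
            rw [hxn]
            apply mul_le_mul hdiffn le_rfl (by positivity) (by positivity)
        _ = 2*(M^(k+1) * (4*‖x‖)^(n+1)) := by rw [mul_pow]; ring
        _ ≤ 2*(M^(n+1) * (4*‖x‖)^(n+1)) := by
            have : M^(k+1) ≤ M^(n+1) := pow_le_pow_right₀ hM1 (by omega)
            apply mul_le_mul_of_nonneg_left _ (by norm_num)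
            apply mul_le_mul_of_nonneg_right this (by positivity)
        _ = 2*((4*M*‖x‖)^(n+1)) := by
            rw [show (4*M*‖x‖)^(n+1) = M^(n+1)*(4*‖x‖)^(n+1) by
              rw [← mul_pow]; ring_nf]
        _ = 2*(s^(n+1) * s^(n+1)) := by rw [← hss, ← mul_pow]
        _ ≤ 2*(s^(k+1) * s^(n+1)) := by
            have : s^(n+1) ≤ s^(k+1) := pow_le_pow_of_le_one hs0 hs1.le (by omega)
            apply mul_le_mul_of_nonneg_left _ (by norm_num)
            apply mul_le_mul_of_nonneg_right this (by positivity)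
        _ = (2*s^(k+1)) * s^(n+1) := by ring
    · have hA : aC (k+1) (n+1) = 0 := aC_eq_zero (by omega)
      have hB : aC (k+2) (n+1) = 0 := aC_eq_zero (by omega)
      have hFz : F (k,n) = 0 := by
        rw [hFdef]
        simp [hA, hB]
      rw [hFz, norm_zero]
      positivity
  -- summability of the double family
  have hgs : Summable (fun q : ℕ×ℕ => (2*s^(q.1+1)) * s^(q.2+1)) := by
    apply Summable.mul_of_nonneg (f := fun k : ℕ => 2*s^(k+1)) (g := fun n : ℕ => s^(n+1))
    · have h := (summable_geometric_of_lt_one hs0 hs1).mul_left (2*s)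
      have he : (fun k : ℕ => (2*s)*s^k) = fun k => 2*s^(k+1) :=
        funext fun k => by rw [pow_succ]; ring
      rwa [he] at h
    · have h := (summable_geometric_of_lt_one hs0 hs1).mul_left s
      have he : (fun k : ℕ => s*s^k) = fun k => s^(k+1) :=
        funext fun k => by rw [pow_succ]; ring
      rwa [he] at h
    · intro k; positivity
    · intro n; positivity
  have hFs : Summable F := Summable.of_norm_bounded hgs hFbound
  obtain ⟨S, hFS⟩ := hFs
  have hn1 : ∀ n : ℕ, ((n:ℂ)+1) ≠ 0 := fun n => by
    exact_mod_cast Nat.cast_add_one_ne_zero (R := ℂ) n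
  refine ⟨S, ?_, ?_⟩
  · -- first component: sum over n of the b-coefficients
    have hswap : HasSum (F ∘ (Equiv.prodComm ℕ ℕ)) S :=
      (Equiv.prodComm ℕ ℕ).hasSum_iff.mpr hFS
    apply hswap.prod_fiberwise
    intro n
    have hvan : ∀ k ∉ Finset.range (n+1), F (k, n) = 0 := by
      intro k hk
      have hkn : n < k := by
        by_contra h
        exact hk (Finset.mem_range.2 (by omega))
      have hA : aC (k+1) (n+1) = 0 := aC_eq_zero (by omega)
      have hB : aC (k+2) (n+1) = 0 := aC_eq_zero (by omega)
      rw [hFdef]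
      simp [hA, hB]
    have hfin : HasSum (fun k => F (k, n)) (∑ k ∈ Finset.range (n+1), F (k, n)) :=
      hasSum_sum_of_ne_finset_zero hvan
    have hval : ∑ k ∈ Finset.range (n+1), F (k, n)
        = ((b0coef t (n+1) : ℝ) : ℂ) / (((n:ℂ)+1) * 4^(n+1)) * (4*z/(1+z)^2)^(n+1) := by
      have hw : (4*z/(1+z)^2) = 4*x := by rw [hxdef]; ring
      have hb0 : ((b0coef t (n+1) : ℝ) : ℂ) = 2 * ∑ i ∈ Finset.range (n+1),
          (((2*(n+1)).choose (n-i) : ℕ) : ℂ) * ((cc (i+1) : ℝ) : ℂ) := by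
        rw [b0coef]
        rw [show Finset.Icc 1 (n+1) = Finset.Ico 1 (n+1+1) from (Finset.Ico_add_one_right_eq_Icc 1 (n+1)).symm,
          Finset.sum_Ico_eq_sum_range, show n+1+1-1 = n+1 from rfl]
        push_cast
        rw [Finset.mul_sum, Finset.mul_sum]
        apply Finset.sum_congr rfl
        intro i hi
        have hi' : i ≤ n := by have := Finset.mem_range.1 hi; omega
        have e1 : n+1-(1+i) = n-i := by omega
        have e2 : 1+i-1 = i := by omega
        have e3 : ((1:ℕ)+i : ℝ) = (i:ℝ)+1 := by push_cast; ring
        rw [hccdef]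
        simp only [e1, e2]
        push_cast
        ring
      rw [hw, mul_pow, hb0]
      have h4ne : ((4:ℂ))^(n+1) ≠ 0 := by norm_num
      -- termwise
      have hterm : ∀ k ∈ Finset.range (n+1), F (k, n)
          = 2 * ((cc (k+1) : ℝ) : ℂ) * (((2*(n+1)).choose (n-k) : ℕ) : ℂ) * x^(n+1) / ((n:ℂ)+1) := by
        intro k hk
        have hk' : k ≤ n := by have := Finset.mem_range.1 hk; omega
        have hL := L1C n k hk'
        have hLC : (((aC (k+1) (n+1) : ℕ) : ℂ) - ((aC (k+2) (n+1) : ℕ) : ℂ)) * ((n:ℂ)+1)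
            = ((k:ℂ)+1) * (((2*(n+1)).choose (n-k) : ℕ) : ℂ) := by
          have := congrArg (Complex.ofReal) hL
          push_cast at this ⊢
          linear_combination this
        simp only [hFdef]
        rw [div_mul_eq_mul_div, div_eq_div_iff (hn1 k) (hn1 n)]
        linear_combination (2*((cc (k+1) : ℝ):ℂ)*x^(n+1)) * hLC
      rw [Finset.sum_congr rfl hterm]
      rw [← Finset.sum_div]
      rw [div_mul_eq_mul_div, div_eq_div_iff (hn1 n) (mul_ne_zero (hn1 n) h4ne),
        Finset.sum_mul, Finset.mul_sum,
        Finset.sum_mul, Finset.sum_mul]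
      apply Finset.sum_congr rfl
      intro i hi
      ring
    rw [hval] at hfin
    exact hfin
  · -- second component
    apply hFS.prod_fiberwise
    intro k
    have hg := gSeries hδ1 hz0 hx12 k
    have hg1 : HasSum (fun n => (((aC (k+1) (n+1) : ℕ) : ℂ) - ((aC (k+2) (n+1) : ℕ) : ℂ))
        * x^(n+1)) (z^(k+1)) := by
      apply shift_hasSum hg
      simp [aC_zero]
    have hg2 := hg1.mul_left (2*((cc (k+1) : ℝ) : ℂ)/((k:ℂ)+1))
    have hfun : (fun n => F (k, n)) = fun n => (2*((cc (k+1) : ℝ) : ℂ)/((k:ℂ)+1)) *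
        ((((aC (k+1) (n+1) : ℕ) : ℂ) - ((aC (k+2) (n+1) : ℕ) : ℂ)) * x^(n+1)) := by
      funext n
      simp only [hFdef]
    have hvalue : (2*((cc (k+1) : ℝ) : ℂ)/((k:ℂ)+1)) * z^(k+1)
        = 2 * (1 / ((k : ℂ) + 1)) * Complex.exp (-((k : ℂ) + 1) * t) *
          ((Lag k 1 (2 * ((k : ℝ) + 1) * t) : ℝ) : ℂ) * z ^ (k + 1) := by
      rw [hcck k]
      rw [Complex.ofReal_mul, Complex.ofReal_exp]
      rw [show ((-((k:ℝ)+1)*t : ℝ) : ℂ) = -((k:ℂ)+1)*(t:ℂ) by push_cast; ring]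
      field_simp
    rw [hfun]
    rw [← hvalue]
    exact hg2
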